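/- For integers p, q ≥ 1 and every integer k with 0 ≤ k ≤ min(p,q), the number γ_{k,p,q} of signed (p,q)-involutions whose underlying involution has exactly k two-cycles is given by γ_{k,p,q} = (p+q)! / ((p−k)! · (q−k)! · 2^k · k!). -/

import Mathlib

/-- A signed `(p,q)`-involution: a pair `(π, ε)` where `π` is an involution of
`{1,…,p+q}` and `ε` assigns a sign (`true` = `+`, `false` = `-`) to each fixed
point of `π` (we normalize `ε` to be `true` on non-fixed points), such that the
number of fixed points with sign `+` minus the number of fixed points with
sign `-` equals `p - q`. -/
def IsSignedInv (p q : ℕ) (x : Equiv.Perm (Fin (p + q)) × (Fin (p + q) → Bool)) : Prop :=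
  x.1 * x.1 = 1 ∧ (∀ i, x.1 i ≠ i → x.2 i = true) ∧
    ((Finset.univ.filter fun i => x.1 i = i ∧ x.2 i = true).card : ℤ) -
      ((Finset.univ.filter fun i => x.1 i = i ∧ x.2 i = false).card : ℤ) = (p : ℤ) - (q : ℤ)

/-- `γ_{k,p,q}`: the number of signed `(p,q)`-involutions whose underlying
involution has exactly `k` two-cycles, i.e. exactly `2k` non-fixed points. -/
noncomputable def gammaCount (k p q : ℕ) : ℕ :=
  Nat.card {x : Equiv.Perm (Fin (p + q)) × (Fin (p + q) → Bool) //
    IsSignedInv p q x ∧ (Finset.univ.filter fun i => x.1 i ≠ i).card = 2 * k}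


open Equiv Finset


section Restrict
variable {α : Type*} [DecidableEq α]

def permExt {A : Finset α} (τ : Equiv.Perm {x // x ∈ A}) : Equiv.Perm α :=
  τ.extendDomain (Equiv.refl _)

lemma permExt_mem {A : Finset α} (τ : Equiv.Perm {x // x ∈ A}) {x : α} (hx : x ∈ A) :
    permExt τ x = τ ⟨x, hx⟩ := by
  simpa [permExt] using Equiv.Perm.extendDomain_apply_subtype τ (Equiv.refl _) hx

lemma permExt_not_mem {A : Finset α} (τ : Equiv.Perm {x // x ∈ A}) {x : α} (hx : x ∉ A) :
    permExt τ x = x := Equiv.Perm.extendDomain_apply_not_subtype τ (Equiv.refl _) hx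

end Restrict

def FPF (α : Type*) : Type _ := {σ : Equiv.Perm α // σ * σ = 1 ∧ ∀ i, σ i ≠ i}

noncomputable def Dcount (m : ℕ) : ℕ := Nat.card (FPF (Fin m))

/-- Fiberwise counting: if all fibers of `f` have the same cardinality `c`. -/
lemma card_eq_card_mul_of_fibers {α β : Type*} [Finite α] [Finite β] (f : α → β) (c : ℕ)
    (h : ∀ b, Nat.card {a // f a = b} = c) : Nat.card α = Nat.card β * c := by
  classical
  cases nonempty_fintype α; cases nonempty_fintype β
  rw [Nat.card_eq_fintype_card, ← Fintype.card_congr (Equiv.sigmaFiberEquiv f),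
    Fintype.card_sigma, Nat.card_eq_fintype_card (α := β)]
  have : ∀ b : β, Fintype.card {a // f a = b} = c := by
    intro b; rw [← Nat.card_eq_fintype_card]; exact h b
  simp [this, Finset.sum_const, mul_comm]


instance {α : Type*} [Finite α] : Finite (FPF α) := by unfold FPF; infer_instance

lemma permCongr_mul {α β : Type*} (e : α ≃ β) (σ τ : Equiv.Perm α) :
    e.permCongr (σ * τ) = e.permCongr σ * e.permCongr τ := by
  ext x; simp [Equiv.permCongr_apply, Equiv.Perm.mul_apply]

lemma permCongr_one {α β : Type*} (e : α ≃ β) :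
    e.permCongr (1 : Equiv.Perm α) = 1 := by
  ext x; simp [Equiv.permCongr_apply]

def fpfCongr {α β : Type*} (e : α ≃ β) : FPF α ≃ FPF β :=
  Equiv.subtypeEquiv e.permCongr (by
    intro σ
    have h1 : e.permCongr σ * e.permCongr σ = 1 ↔ σ * σ = 1 := by
      rw [← _root_.permCongr_mul, ← permCongr_one e, Equiv.apply_eq_iff_eq]
    have h2 : (∀ i, e.permCongr σ i ≠ i) ↔ ∀ i, σ i ≠ i := by
      constructor
      · intro h i
        have := h (e i)
        simpa [Equiv.permCongr_apply] using this
      · intro h i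
        simp only [Equiv.permCongr_apply, ne_eq]
        intro hc
        exact h (e.symm i) (by conv_rhs => rw [← hc]; rw [Equiv.symm_apply_apply])
    rw [h1, h2])


lemma card_FPF {α : Type*} [Fintype α] : Nat.card (FPF α) = Dcount (Fintype.card α) :=
  Nat.card_congr (fpfCongr (Fintype.equivFinOfCardEq rfl))

lemma Dcount_zero : Dcount 0 = 1 := by
  have : Unique (FPF (Fin 0)) :=
    { default := ⟨1, by simp, fun i => i.elim0⟩
      uniq := fun x => Subtype.ext (by ext i; exact i.elim0) }
  simpa [Dcount] using Nat.card_unique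


section Rec
variable (m : ℕ) (j : Fin (m + 2))

def recA : Finset (Fin (m + 2)) := ({0, j} : Finset (Fin (m + 2)))ᶜ

lemma mem_recA {x : Fin (m + 2)} : x ∈ recA m j ↔ x ≠ 0 ∧ x ≠ j := by
  simp [recA, not_or]

def recFval (τ : Equiv.Perm {x // x ∈ recA m j}) : Equiv.Perm (Fin (m + 2)) :=
  Equiv.swap (0 : Fin (m + 2)) j * permExt τ

lemma recFval_zero (τ : Equiv.Perm {x // x ∈ recA m j}) : recFval m j τ 0 = j := by
  rw [recFval, Equiv.Perm.mul_apply, permExt_not_mem τ (by simp [mem_recA]),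
    Equiv.swap_apply_left]

lemma recFval_j (τ : Equiv.Perm {x // x ∈ recA m j}) : recFval m j τ j = 0 := by
  rw [recFval, Equiv.Perm.mul_apply, permExt_not_mem τ (by simp [mem_recA]),
    Equiv.swap_apply_right]

lemma recFval_mem (τ : Equiv.Perm {x // x ∈ recA m j}) {x : Fin (m + 2)} (hx : x ∈ recA m j) :
    recFval m j τ x = (τ ⟨x, hx⟩ : Fin (m + 2)) := by
  have hm := (τ ⟨x, hx⟩).2
  rw [mem_recA] at hm
  rw [recFval, Equiv.Perm.mul_apply, permExt_mem τ hx,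
    Equiv.swap_apply_of_ne_of_ne hm.1 hm.2]

variable (hj : j ≠ 0)

def recF (τ : FPF {x // x ∈ recA m j}) : {σ : FPF (Fin (m + 2)) // σ.1 0 = j} := by
  obtain ⟨τ, hτinv, hτfpf⟩ := τ
  have hττ : ∀ y, τ (τ y) = y := fun y => by rw [← Equiv.Perm.mul_apply, hτinv]; rfl
  refine ⟨⟨recFval m j τ, ?_, ?_⟩, recFval_zero m j τ⟩
  · ext x
    simp only [Equiv.Perm.mul_apply, Equiv.Perm.one_apply]
    rcases eq_or_ne x 0 with rfl | hx0
    · rw [recFval_zero, recFval_j]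
    rcases eq_or_ne x j with rfl | hxj
    · rw [recFval_j, recFval_zero]
    · have hx : x ∈ recA m j := (mem_recA m j).2 ⟨hx0, hxj⟩
      rw [recFval_mem m j τ hx, recFval_mem m j τ (τ ⟨x, hx⟩).2]
      simp [hττ]
  · intro x hc
    rcases eq_or_ne x 0 with rfl | hx0
    · rw [recFval_zero] at hc; exact hj hc
    rcases eq_or_ne x j with rfl | hxj
    · rw [recFval_j] at hc; exact hj hc.symm
    · have hx : x ∈ recA m j := (mem_recA m j).2 ⟨hx0, hxj⟩
      rw [recFval_mem m j τ hx] at hc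
      exact hτfpf ⟨x, hx⟩ (Subtype.ext hc)

lemma recF_val (τ : FPF {x // x ∈ recA m j}) : ((recF m j hj τ).1 : FPF _).1 = recFval m j τ.1 := by
  obtain ⟨τ, hτinv, hτfpf⟩ := τ; rfl

lemma recF_bij : Function.Bijective (recF m j hj) := by
  constructor
  · intro τ τ' h
    have hval : recFval m j τ.1 = recFval m j τ'.1 := by
      rw [← recF_val m j hj τ, ← recF_val m j hj τ', h]
    apply Subtype.ext
    ext x
    obtain ⟨x, hx⟩ := x
    have := congrArg (fun (f : Equiv.Perm (Fin (m+2))) => f x) hval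
    simp only [recFval_mem m j _ hx] at this
    exact congrArg Fin.val this
  · rintro ⟨⟨σ, hinv, hfpf⟩, h0⟩
    have hσ : ∀ x, σ (σ x) = x := fun x => by rw [← Equiv.Perm.mul_apply, hinv]; rfl
    have hjj : σ j = 0 := by rw [← h0, hσ]
    have hmem : ∀ x, x ∈ recA m j ↔ σ x ∈ recA m j := by
      intro x
      simp only [mem_recA]
      constructor
      · rintro ⟨h1, h2⟩
        refine ⟨fun hc => h2 ?_, fun hc => h1 ?_⟩
        · rw [← hjj] at hc; exact σ.injective hc
        · rw [← h0] at hc; exact σ.injective hc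
      · rintro ⟨h1, h2⟩
        refine ⟨fun hc => h2 ?_, fun hc => h1 ?_⟩
        · rw [hc, h0]
        · rw [hc, hjj]
    refine ⟨⟨σ.subtypePerm (fun x => (hmem x).symm), ?_, ?_⟩, ?_⟩
    · ext x
      obtain ⟨x, hx⟩ := x
      simp [Equiv.Perm.mul_apply, Equiv.Perm.subtypePerm_apply, hσ]
    · rintro ⟨x, hx⟩ hc
      exact hfpf x (by simpa [Subtype.ext_iff] using hc)
    · apply Subtype.ext
      apply Subtype.ext
      show recFval m j _ = _
      ext x
      rcases eq_or_ne x 0 with rfl | hx0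
      · rw [recFval_zero, h0]
      rcases eq_or_ne x j with rfl | hxj
      · rw [recFval_j, hjj]
      · have hx : x ∈ recA m j := (mem_recA m j).2 ⟨hx0, hxj⟩
        rw [recFval_mem m j _ hx]
        rfl

end Rec


lemma card_recA (m : ℕ) (j : Fin (m + 2)) (hj : j ≠ 0) :
    Fintype.card {x // x ∈ recA m j} = m := by
  rw [Fintype.card_coe, recA, Finset.card_compl, Fintype.card_fin,
    Finset.card_insert_of_notMem (by simp [hj.symm]), Finset.card_singleton]
  omega

lemma Dcount_rec (m : ℕ) : Dcount (m + 2) = (m + 1) * Dcount m := by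
  classical
  have hfib : ∀ b : {j : Fin (m + 2) // j ≠ 0},
      Nat.card {σ : FPF (Fin (m + 2)) // σ.1 0 = b.1} = Dcount m := by
    rintro ⟨j, hj⟩
    rw [← Nat.card_congr (Equiv.ofBijective _ (recF_bij m j hj)),
      show Nat.card (FPF {x // x ∈ recA m j}) = Dcount (Fintype.card {x // x ∈ recA m j})
        from card_FPF, card_recA m j hj]
  have := card_eq_card_mul_of_fibers
    (fun σ : FPF (Fin (m + 2)) => (⟨σ.1 0, σ.2.2 0⟩ : {j : Fin (m + 2) // j ≠ 0})) (Dcount m)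
    (by
      rintro ⟨j, hj⟩
      rw [← hfib ⟨j, hj⟩]
      exact Nat.card_congr (Equiv.subtypeEquivRight (fun σ => by
        simp [Subtype.ext_iff])))
  rw [Dcount, this]
  congr 1
  rw [Nat.card_eq_fintype_card]
  simp [Fintype.card_subtype_compl, Fintype.card_subtype_eq]

lemma Dcount_formula (k : ℕ) : Dcount (2 * k) * (2 ^ k * k.factorial) = (2 * k).factorial := by
  induction k with
  | zero => simp [Dcount_zero]
  | succ k ih =>
    have h2 : 2 * (k + 1) = 2 * k + 2 := by ring
    rw [h2, Dcount_rec]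
    have : (2 * k + 2).factorial = (2 * k + 2) * ((2 * k + 1) * (2 * k).factorial) := by
      rw [Nat.factorial_succ, Nat.factorial_succ]
    rw [this, ← ih, Nat.factorial_succ, pow_succ]
    ring

section Claim2a
variable (n k : ℕ)

/-- involutions of `Fin n` with exactly `k` two-cycles -/
def InvK : Type :=
  {σ : Equiv.Perm (Fin n) // σ * σ = 1 ∧ (Finset.univ.filter fun i => σ i ≠ i).card = 2 * k}

instance : Finite (InvK n k) := by unfold InvK; infer_instance

variable {n k} (A : Finset (Fin n)) (hA : A.card = 2 * k)

lemma permExt_support (τ : FPF {x // x ∈ A}) :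
    (Finset.univ.filter fun x => permExt τ.1 x ≠ x) = A := by
  obtain ⟨τ, hτinv, hτfpf⟩ := τ
  ext x
  simp only [Finset.mem_filter, Finset.mem_univ, true_and]
  by_cases hx : x ∈ A
  · rw [permExt_mem τ hx]
    simp only [hx, iff_true]
    intro hc
    exact hτfpf ⟨x, hx⟩ (Subtype.ext hc)
  · rw [permExt_not_mem τ hx]
    simp [hx]

def invF (τ : FPF {x // x ∈ A}) : {σ : InvK n k // (Finset.univ.filter fun i => σ.1 i ≠ i) = A} := by
  refine ⟨⟨permExt τ.1, ?_, ?_⟩, permExt_support A τ⟩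
  · obtain ⟨τ, hτinv, hτfpf⟩ := τ
    have hττ : ∀ y, τ (τ y) = y := fun y => by rw [← Equiv.Perm.mul_apply, hτinv]; rfl
    ext x
    simp only [Equiv.Perm.mul_apply, Equiv.Perm.one_apply]
    by_cases hx : x ∈ A
    · rw [permExt_mem τ hx, permExt_mem τ (τ ⟨x, hx⟩).2]
      simp [hττ]
    · rw [permExt_not_mem τ hx, permExt_not_mem τ hx]
  · rw [permExt_support A τ, hA]

lemma invF_val (τ : FPF {x // x ∈ A}) : ((invF A hA τ).1 : InvK n k).1 = permExt τ.1 := rfl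

lemma invF_bij : Function.Bijective (invF A hA) := by
  constructor
  · intro τ τ' h
    have hval : permExt τ.1 = permExt τ'.1 := by
      rw [← invF_val A hA τ, ← invF_val A hA τ', h]
    apply Subtype.ext
    ext x
    obtain ⟨x, hx⟩ := x
    have := congrArg (fun (f : Equiv.Perm (Fin n)) => f x) hval
    simp only [permExt_mem _ hx] at this
    exact congrArg Fin.val this
  · rintro ⟨⟨σ, hinv, hcard⟩, hsup⟩
    have hσ : ∀ x, σ (σ x) = x := fun x => by rw [← Equiv.Perm.mul_apply, hinv]; rfl
    have hmem : ∀ x, x ∈ A ↔ σ x ∈ A := by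
      intro x
      rw [← hsup]
      simp only [Finset.mem_filter, Finset.mem_univ, true_and]
      rw [hσ x]
      exact ne_comm
    refine ⟨⟨σ.subtypePerm (fun x => (hmem x).symm), ?_, ?_⟩, ?_⟩
    · ext x
      obtain ⟨x, hx⟩ := x
      simp [Equiv.Perm.mul_apply, Equiv.Perm.subtypePerm_apply, hσ]
    · rintro ⟨x, hx⟩ hc
      have : σ x ≠ x := by
        have := hx; rw [← hsup] at this
        simpa using this
      exact this (by simpa [Subtype.ext_iff] using hc)
    · apply Subtype.ext
      apply Subtype.ext
      show permExt _ = _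
      ext x
      by_cases hx : x ∈ A
      · rw [permExt_mem _ hx]; rfl
      · rw [permExt_not_mem _ hx]
        have := hx; rw [← hsup] at this
        simp only [Finset.mem_filter, Finset.mem_univ, true_and, not_not] at this
        exact (congrArg Fin.val this).symm

lemma card_InvK : Nat.card (InvK n k) = n.choose (2 * k) * Dcount (2 * k) := by
  classical
  have hfib : ∀ b : {A : Finset (Fin n) // A.card = 2 * k},
      Nat.card {σ : InvK n k // (Finset.univ.filter fun i => σ.1 i ≠ i) = b.1} =
        Dcount (2 * k) := by
    rintro ⟨A, hA⟩
    rw [← Nat.card_congr (Equiv.ofBijective _ (invF_bij A hA)),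
      show Nat.card (FPF {x // x ∈ A}) = Dcount (Fintype.card {x // x ∈ A}) from card_FPF,
      Fintype.card_coe, hA]
  have := card_eq_card_mul_of_fibers
    (fun σ : InvK n k =>
      (⟨Finset.univ.filter fun i => σ.1 i ≠ i, σ.2.2⟩ : {A : Finset (Fin n) // A.card = 2 * k}))
    (Dcount (2 * k))
    (by
      rintro ⟨A, hA⟩
      rw [← hfib ⟨A, hA⟩]
      exact Nat.card_congr (Equiv.subtypeEquivRight (fun σ => by simp [Subtype.ext_iff])))
  rw [this, Nat.card_eq_fintype_card]
  congr 1
  rw [Fintype.card_finset_len, Fintype.card_fin]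

end Claim2a

section Claim1
variable (p q k : ℕ)

abbrev Xtype : Type :=
  {x : Equiv.Perm (Fin (p + q)) × (Fin (p + q) → Bool) //
    IsSignedInv p q x ∧ (Finset.univ.filter fun i => x.1 i ≠ i).card = 2 * k}

variable {p q k} (hkp : k ≤ p) (hkq : k ≤ q) (σ : InvK (p + q) k)

lemma card_fix : (Finset.univ.filter fun i => σ.1 i = i).card = p + q - 2 * k := by
  have h1 := Finset.card_filter_add_card_filter_not (s := (Finset.univ : Finset (Fin (p+q))))
    (p := fun i => σ.1 i = i)
  have h2 : (Finset.univ.filter fun i => ¬ σ.1 i = i) =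
      (Finset.univ.filter fun i => σ.1 i ≠ i) := by ext i; simp
  rw [h2, σ.2.2, Finset.card_univ, Fintype.card_fin] at h1
  omega

def sigG (s : {s : Finset (Fin (p + q)) //
    s ⊆ (Finset.univ.filter fun i => σ.1 i = i) ∧ s.card = q - k}) :
    {x : Xtype p q k // x.1.1 = σ.1} := by
  refine ⟨⟨(σ.1, fun i => if i ∈ s.1 then false else true), ⟨σ.2.1, ?_, ?_⟩, σ.2.2⟩, rfl⟩
  · intro i hi
    have : i ∉ s.1 := fun hc => hi (by simpa using s.2.1 hc)
    simp [this]
  · have hT : (Finset.univ.filter fun i => σ.1 i = i ∧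
        (if i ∈ s.1 then false else true) = true) =
        (Finset.univ.filter fun i => σ.1 i = i) \ s.1 := by
      ext i
      rcases Classical.em (i ∈ s.1) with hi | hi
      · have hfx := s.2.1 hi
        simp only [Finset.mem_filter, Finset.mem_univ, true_and] at hfx
        simp [hi, Finset.mem_sdiff, hfx]
      · simp [hi, Finset.mem_sdiff]
    have hF : (Finset.univ.filter fun i => σ.1 i = i ∧
        (if i ∈ s.1 then false else true) = false) = s.1 := by
      ext i
      rcases Classical.em (i ∈ s.1) with hi | hi
      · have hfx := s.2.1 hi
        simp only [Finset.mem_filter, Finset.mem_univ, true_and] at hfx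
        simp [hi, hfx]
      · simp [hi]
    rw [hT, hF, Finset.card_sdiff_of_subset s.2.1, card_fix σ, s.2.2]
    omega

lemma sigG_bij (hkp : k ≤ p) (hkq : k ≤ q) (σ : InvK (p + q) k) : Function.Bijective (sigG hkp hkq σ) := by
  constructor
  · intro s s' h
    have hε : (fun i => if i ∈ s.1 then false else true) =
        (fun i : Fin (p + q) => if i ∈ s'.1 then false else true) :=
      congrArg (fun x => x.1.1.2) h
    apply Subtype.ext
    ext i
    have := congrFun hε i
    by_cases hi : i ∈ s.1 <;> by_cases hi' : i ∈ s'.1 <;>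
      simp [hi, hi'] at this ⊢
  · rintro ⟨⟨⟨π, ε⟩, ⟨⟨hinv, hnorm, hbal⟩, hcard⟩⟩, hπ⟩
    simp only at hπ
    subst hπ
    dsimp only at hcard hinv hnorm hbal
    set s : Finset (Fin (p + q)) := Finset.univ.filter (fun i => ε i = false) with hs
    have hfix : ∀ i, ε i = false → σ.1 i = i := by
      intro i hi
      by_contra hc
      have h2 : ε i = true := hnorm i hc
      simp [h2] at hi
    have hsub : s ⊆ Finset.univ.filter fun i => σ.1 i = i := by
      intro i hi
      simp only [hs, Finset.mem_filter, Finset.mem_univ, true_and] at hi ⊢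
      exact hfix i hi
    have hseq : (Finset.univ.filter fun i => σ.1 i = i ∧ ε i = false) = s := by
      ext i
      simp only [hs, Finset.mem_filter, Finset.mem_univ, true_and]
      exact ⟨fun h => h.2, fun h => ⟨hfix i h, h⟩⟩
    have hpart : (Finset.univ.filter fun i => σ.1 i = i ∧ ε i = true).card +
        (Finset.univ.filter fun i => σ.1 i = i ∧ ε i = false).card =
        (Finset.univ.filter fun i => σ.1 i = i).card := by
      have h1 := Finset.card_filter_add_card_filter_not
        (s := Finset.univ.filter fun i => σ.1 i = i) (p := fun i => ε i = true)
      simp only [Finset.filter_filter, Bool.not_eq_true] at h1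
      exact h1
    have hfcd : s.card = q - k := by
      rw [card_fix σ] at hpart
      rw [hseq] at hpart
      rw [hseq] at hbal
      omega
    refine ⟨⟨s, hsub, hfcd⟩, ?_⟩
    apply Subtype.ext
    apply Subtype.ext
    show ((σ.1 : Equiv.Perm (Fin (p+q))), fun i => if i ∈ s then false else true) = (σ.1, ε)
    refine Prod.ext rfl ?_
    funext i
    by_cases hi : i ∈ s
    · have hif : ε i = false := by simpa [hs] using hi
      simp [hi, hif]
    · have hit : ε i = true := by
        have h3 : ¬ ε i = false := by simpa [hs] using hi
        simpa using h3
      simp [hi, hit]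

lemma card_sub_choose (σ : InvK (p + q) k) :
    Nat.card {s : Finset (Fin (p + q)) //
      s ⊆ (Finset.univ.filter fun i => σ.1 i = i) ∧ s.card = q - k} =
      (p + q - 2 * k).choose (q - k) := by
  classical
  rw [Nat.card_eq_fintype_card, Fintype.card_subtype]
  have : (Finset.univ.filter fun s : Finset (Fin (p + q)) =>
      s ⊆ (Finset.univ.filter fun i => σ.1 i = i) ∧ s.card = q - k) =
      (Finset.univ.filter fun i => σ.1 i = i).powersetCard (q - k) := by
    ext s; simp [Finset.mem_powersetCard]
  rw [this, Finset.card_powersetCard, card_fix σ]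

lemma claim1 (h1 : k ≤ p) (h2 : k ≤ q) :
    gammaCount k p q = Nat.card (InvK (p + q) k) * (p + q - 2 * k).choose (q - k) := by
  classical
  have := card_eq_card_mul_of_fibers
    (fun x : Xtype p q k => (⟨x.1.1, x.2.1.1, x.2.2⟩ : InvK (p + q) k))
    ((p + q - 2 * k).choose (q - k))
    (by
      intro σ
      calc Nat.card {a : Xtype p q k //
              (⟨a.1.1, a.2.1.1, a.2.2⟩ : InvK (p + q) k) = σ}
          = Nat.card {x : Xtype p q k // x.1.1 = σ.1} :=
            Nat.card_congr (Equiv.subtypeEquivRight (fun x => Subtype.ext_iff))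
        _ = Nat.card {s : Finset (Fin (p + q)) //
              s ⊆ (Finset.univ.filter fun i => σ.1 i = i) ∧ s.card = q - k} :=
            (Nat.card_congr (Equiv.ofBijective _ (sigG_bij h1 h2 σ))).symm
        _ = (p + q - 2 * k).choose (q - k) := card_sub_choose σ)
  exact this


theorem stmt0 (p q k : ℕ) (hp : 1 ≤ p) (hq : 1 ≤ q) (hk : k ≤ min p q) :
    gammaCount k p q * ((p - k).factorial * (q - k).factorial * (2 ^ k * k.factorial)) =
      (p + q).factorial := by
  have hkp : k ≤ p := le_trans hk (min_le_left p q)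
  have hkq : k ≤ q := le_trans hk (min_le_right p q)
  rw [claim1 hkp hkq, card_InvK]
  have hA : (p + q - 2 * k).choose (q - k) * (q - k).factorial * (p - k).factorial =
      (p + q - 2 * k).factorial := by
    have h := Nat.choose_mul_factorial_mul_factorial
      (show q - k ≤ p + q - 2 * k by omega)
    rwa [show p + q - 2 * k - (q - k) = p - k by omega] at h
  have hB : (p + q).choose (2 * k) * (2 * k).factorial * (p + q - 2 * k).factorial =
      (p + q).factorial := Nat.choose_mul_factorial_mul_factorial (by omega)
  have hD := Dcount_formula k
  calc (p + q).choose (2 * k) * Dcount (2 * k) * (p + q - 2 * k).choose (q - k) *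
        ((p - k).factorial * (q - k).factorial * (2 ^ k * k.factorial))
      = (p + q).choose (2 * k) *
          (((p + q - 2 * k).choose (q - k) * (q - k).factorial * (p - k).factorial) *
            (Dcount (2 * k) * (2 ^ k * k.factorial))) := by ring
    _ = (p + q).choose (2 * k) * ((p + q - 2 * k).factorial * (2 * k).factorial) := by
        rw [hA, hD]
    _ = (p + q).factorial := by rw [← hB]; ring
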